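/- arXiv:1809.07233 — 2 statements merged into one kernel-verified Lean document; each statement's English description precedes it below -/
import Mathlib

section
/- Let p > q ≥ 1 be coprime integers. Let (e_1, …, e_k) be a list of integers with each e_i ≥ 2 whose Hirzebruch–Jung continued fraction value equals p/q, and let (e'_1, …, e'_{k'}) be a list of integers with each e'_j ≥ 2 whose Hirzebruch–Jung continued fraction value equals p/(p−q). Then ∑_{i=1}^{k} (e_i − 1) = ∑_{j=1}^{k'} (e'_j − 1). -/
/-- The Hirzebruch–Jung continued fraction `[e_1, …, e_k] = e_1 − 1/[e_2, …, e_k]`,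
with `[e_k] = e_k` (junk value `1` on the empty list). -/
def hjcf : List ℚ → ℚ
  | [] => 1
  | [e] => e
  | e :: f :: rest => e - 1 / hjcf (f :: rest)

lemma hjcf_cons (a f : ℚ) (rest : List ℚ) :
    hjcf (a :: f :: rest) = a - 1 / hjcf (f :: rest) := rfl

lemma hjcf_gt_one : ∀ L : List ℚ, L ≠ [] → (∀ x ∈ L, 2 ≤ x) → 1 < hjcf L
  | [], h, _ => absurd rfl h
  | [e], _, h2 => by
      have := h2 e (by simp)
      simp only [hjcf]; linarith
  | a :: f :: rest, _, h2 => by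
      have ih : 1 < hjcf (f :: rest) :=
        hjcf_gt_one (f :: rest) (by simp) (fun x hx => h2 x (by simp [hx]))
      have ha : 2 ≤ a := h2 a (by simp)
      have hpos : 0 < hjcf (f :: rest) := by linarith
      have : 1 / hjcf (f :: rest) < 1 := by
        rw [div_lt_one hpos]; exact ih
      rw [hjcf_cons]; linarith

lemma hjcf_sub_one_head (a : ℚ) (T : List ℚ) :
    hjcf ((a - 1) :: T) = hjcf (a :: T) - 1 := by
  cases T with
  | nil => simp [hjcf]
  | cons f rest => rw [hjcf_cons, hjcf_cons]; ring

lemma map_entries_ge (T : List ℤ) (h : ∀ x ∈ T, 2 ≤ x) :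
    ∀ x ∈ T.map (fun x : ℤ => (x : ℚ)), 2 ≤ x := by
  intro x hx
  simp only [List.mem_map] at hx
  obtain ⟨y, hy, rfl⟩ := hx
  exact_mod_cast h y hy

/-- head bounds : `v ≤ a` and `a < v + 1` -/
lemma hjcf_head_bounds (a : ℤ) (T : List ℤ) (hE : ∀ x ∈ a :: T, 2 ≤ x) :
    hjcf ((a :: T).map (fun x : ℤ => (x : ℚ))) ≤ (a : ℚ) ∧
    (a : ℚ) < hjcf ((a :: T).map (fun x : ℤ => (x : ℚ))) + 1 := by
  cases T with
  | nil => simp [hjcf]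
  | cons f rest =>
      have hw : 1 < hjcf ((f :: rest).map (fun x : ℤ => (x : ℚ))) :=
        hjcf_gt_one _ (by simp) (map_entries_ge _ (fun x hx => hE x (by simp [hx])))
      have hwpos : 0 < hjcf ((f :: rest).map (fun x : ℤ => (x : ℚ))) := by linarith
      have h1 : 0 < 1 / hjcf ((f :: rest).map (fun x : ℤ => (x : ℚ))) := by positivity
      have h2 : 1 / hjcf ((f :: rest).map (fun x : ℤ => (x : ℚ))) < 1 := by
        rw [div_lt_one hwpos]; exact hw
      have : hjcf ((a :: f :: rest).map (fun x : ℤ => (x : ℚ))) =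
          (a : ℚ) - 1 / hjcf ((f :: rest).map (fun x : ℤ => (x : ℚ))) := by
        simp [hjcf_cons]
      rw [this]
      constructor <;> linarith

/-- a step for values in (1,2): head is 2, tail nonempty with value 1/(2-v). -/
lemma hjcf_step (a : ℤ) (T : List ℤ) (hE : ∀ x ∈ a :: T, 2 ≤ x) (v : ℚ)
    (hv : hjcf ((a :: T).map (fun x : ℤ => (x : ℚ))) = v) (hlt : v < 2) :
    a = 2 ∧ T ≠ [] ∧ hjcf (T.map (fun x : ℤ => (x : ℚ))) = 1 / (2 - v) := by
  cases T with
  | nil =>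
      exfalso
      have : (a : ℚ) = v := by simpa [hjcf] using hv
      have ha : (2 : ℤ) ≤ a := hE a (by simp)
      have : (2:ℚ) ≤ (a:ℚ) := by exact_mod_cast ha
      linarith
  | cons f rest =>
      have hw : 1 < hjcf ((f :: rest).map (fun x : ℤ => (x : ℚ))) :=
        hjcf_gt_one _ (by simp) (map_entries_ge _ (fun x hx => hE x (by simp [hx])))
      set w := hjcf ((f :: rest).map (fun x : ℤ => (x : ℚ))) with hwdef
      have hwpos : 0 < w := by linarith
      have hv' : (a : ℚ) - 1 / w = v := by
        rw [hwdef]; simpa [hjcf_cons] using hv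
      have h1 : 0 < 1 / w := by positivity
      have ha2 : (2 : ℤ) ≤ a := hE a (by simp)
      have ha2' : (2:ℚ) ≤ (a:ℚ) := by exact_mod_cast ha2
      have h2 : 1 / w < 1 := by rw [div_lt_one hwpos]; exact hw
      have halt : (a:ℚ) < 3 := by linarith
      have ha : a = 2 := by
        have : a < 3 := by exact_mod_cast halt
        omega
      refine ⟨ha, by simp, ?_⟩
      have h2v : 1 / w = 2 - v := by
        rw [ha] at hv'; push_cast at hv'; linarith
      rw [← h2v, one_div_one_div]

/-- integer value forces a singleton list -/
lemma hjcf_int_eq (E : List ℤ) (hne : E ≠ []) (hE : ∀ x ∈ E, 2 ≤ x) (m : ℤ)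
    (h : hjcf (E.map (fun x : ℤ => (x : ℚ))) = (m : ℚ)) : E = [m] := by
  match E, hne with
  | [a], _ =>
      simp only [List.map, hjcf] at h
      exact_mod_cast congrArg (fun r => [r]) (show a = m by exact_mod_cast h)
  | a :: f :: rest, _ =>
      exfalso
      have hw : 1 < hjcf ((f :: rest).map (fun x : ℤ => (x : ℚ))) := by
        apply hjcf_gt_one _ (by simp)
        intro x hx
        simp only [List.mem_map] at hx
        obtain ⟨y, hy, rfl⟩ := hx
        exact_mod_cast hE y (by simp [hy])
      set w := hjcf ((f :: rest).map (fun x : ℤ => (x : ℚ))) with hwdef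
      have h : (a:ℚ) - 1 / w = (m:ℚ) := by
        rw [hwdef]
        simpa [hjcf_cons] using h
      have h1 : (0:ℚ) < 1 / w := by positivity
      have h2 : 1 / w < 1 := by rw [div_lt_one (by linarith)]; exact hw
      have : (0:ℚ) < (a : ℚ) - (m:ℚ) := by rw [show ((a:ℚ)) - m = 1/w by linarith]; exact h1
      have h4 : ((a:ℚ)) - m < 1 := by rw [show ((a:ℚ)) - m = 1/w by linarith]; exact h2
      have ha : (0:ℚ) < ((a - m : ℤ) : ℚ) := by push_cast; linarith
      have hb : ((a - m : ℤ) : ℚ) < 1 := by push_cast; linarith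
      have h5 : (0:ℤ) < a - m := by exact_mod_cast ha
      have h6 : (a - m : ℤ) < 1 := by exact_mod_cast hb
      omega

lemma riem_main : ∀ n : ℕ, ∀ p q : ℤ, ∀ E E' : List ℤ,
    p ≤ (n : ℤ) → 1 ≤ q → q < p → IsCoprime p q →
    E ≠ [] → E' ≠ [] → (∀ x ∈ E, 2 ≤ x) → (∀ x ∈ E', 2 ≤ x) →
    hjcf (E.map (fun x : ℤ => (x : ℚ))) = (p : ℚ) / (q : ℚ) →
    hjcf (E'.map (fun x : ℤ => (x : ℚ))) = (p : ℚ) / ((p : ℚ) - (q : ℚ)) →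
    (E.map (fun x => x - 1)).sum = (E'.map (fun x => x - 1)).sum := by
  intro n
  induction n with
  | zero =>
      intro p q E E' hn hq1 hqp _ _ _ _ _ _ _
      exfalso
      have : p ≤ 0 := by exact_mod_cast hn
      omega
  | succ n IH =>
      suffices key : ∀ p q : ℤ, ∀ E E' : List ℤ,
          p ≤ (n : ℤ) + 1 → 1 ≤ q → q < p → IsCoprime p q →
          E ≠ [] → E' ≠ [] → (∀ x ∈ E, 2 ≤ x) → (∀ x ∈ E', 2 ≤ x) →
          hjcf (E.map (fun x : ℤ => (x : ℚ))) = (p : ℚ) / (q : ℚ) →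
          hjcf (E'.map (fun x : ℤ => (x : ℚ))) = (p : ℚ) / ((p : ℚ) - (q : ℚ)) →
          2 * q ≤ p →
          (E.map (fun x => x - 1)).sum = (E'.map (fun x => x - 1)).sum by
        intro p q E E' hn hq1 hqp hcop hne hne' hE hE' hval hval'
        have hn' : p ≤ (n : ℤ) + 1 := by push_cast at hn; omega
        rcases le_total (2 * q) p with h | h
        · exact key p q E E' hn' hq1 hqp hcop hne hne' hE hE' hval hval' h
        · obtain ⟨a, b, hab⟩ := hcop
          have hcop' : IsCoprime p (p - q) := ⟨a + b, -b, by linear_combination hab⟩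
          have hval2 : hjcf (E'.map (fun x : ℤ => (x : ℚ))) = (p : ℚ) / ((p - q : ℤ) : ℚ) := by
            push_cast; exact hval'
          have hval3 : hjcf (E.map (fun x : ℤ => (x : ℚ))) =
              (p : ℚ) / ((p : ℚ) - ((p - q : ℤ) : ℚ)) := by
            push_cast; ring_nf; ring_nf at hval; exact hval
          exact (key p (p - q) E' E hn' (by omega) (by omega) hcop' hne' hne hE' hE
            hval2 hval3 (by omega)).symm
      intro p q E E' hn hq1 hqp hcop hne hne' hE hE' hval hval' h2q
      rcases eq_or_lt_of_le h2q with heq | h2q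
      · -- p = 2q forces q = 1, p = 2, E = E' = [2]
        have hq : q = 1 := by
          have hu : IsUnit q := hcop.isUnit_of_dvd' ⟨2, by omega⟩ dvd_rfl
          rcases Int.isUnit_iff.mp hu with h | h <;> omega
        have hp : p = 2 := by omega
        subst hq hp
        have hvE : hjcf (E.map (fun x : ℤ => (x : ℚ))) = ((2 : ℤ) : ℚ) := by
          rw [hval]; norm_num
        have hvE' : hjcf (E'.map (fun x : ℤ => (x : ℚ))) = ((2 : ℤ) : ℚ) := by
          rw [hval']; norm_num
        rw [hjcf_int_eq E hne hE 2 hvE, hjcf_int_eq E' hne' hE' 2 hvE']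
      · -- generic case: 2q < p
        -- rational positivity facts
        have hq0 : (0:ℚ) < (q:ℚ) := by exact_mod_cast hq1
        have hpq0 : (0:ℚ) < (p:ℚ) - (q:ℚ) := by
          have : (q:ℚ) < (p:ℚ) := by exact_mod_cast hqp
          linarith
        have hp2q0 : (0:ℚ) < (p:ℚ) - 2*(q:ℚ) := by
          have : (2*q : ℤ) < p := h2q
          have : ((2*q:ℤ):ℚ) < (p:ℚ) := by exact_mod_cast this
          push_cast at this; linarith
        -- dual value < 2
        have hv'lt2 : (p : ℚ) / ((p : ℚ) - (q : ℚ)) < 2 := by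
          rw [div_lt_iff₀ hpq0]; linarith
        -- E' = 2 :: T' with T' ≠ [] and value 1/(2 - v')
        cases E' with
        | nil => exact absurd rfl hne'
        | cons e' T' =>
          obtain ⟨he', hT'ne, hT'val⟩ := hjcf_step e' T' hE' _ hval' hv'lt2
          -- E side: value > 2, head ≥ 3
          have hvgt2 : (2:ℚ) < (p:ℚ) / (q:ℚ) := by
            rw [lt_div_iff₀ hq0]; linarith
          cases E with
          | nil => exact absurd rfl hne
          | cons e T =>
            obtain ⟨hb1, hb2⟩ := hjcf_head_bounds e T hE
            rw [hval] at hb1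
            have he3 : 3 ≤ e := by
              have : (2:ℚ) < (e:ℚ) := lt_of_lt_of_le hvgt2 hb1
              have : (2:ℤ) < e := by exact_mod_cast this
              omega
            -- E'' = (e-1) :: T, value p/q - 1 = (p-q)/q
            have hE''val : hjcf ((((e - 1) :: T) : List ℤ).map (fun x : ℤ => (x : ℚ)))
                = (p:ℚ)/(q:ℚ) - 1 := by
              have hmap : (((e - 1) :: T) : List ℤ).map (fun x : ℤ => (x : ℚ))
                  = ((e:ℚ) - 1) :: T.map (fun x : ℤ => (x : ℚ)) := by
                simp
              rw [hmap, hjcf_sub_one_head]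
              have : ((e :: T) : List ℤ).map (fun x : ℤ => (x : ℚ))
                  = (e:ℚ) :: T.map (fun x : ℤ => (x : ℚ)) := by simp
              rw [← this, hval]
            -- convert tail value
            have hT'val2 : hjcf (T'.map (fun x : ℤ => (x : ℚ)))
                = ((p - q : ℤ) : ℚ) / ((p - 2*q : ℤ) : ℚ) := by
              rw [hT'val]
              have hd : (2:ℚ) - (p : ℚ) / ((p : ℚ) - (q : ℚ))
                  = ((p:ℚ) - 2*q) / ((p:ℚ) - q) := by
                field_simp; ring
              rw [hd, one_div_div]
              push_cast; ring_nf
            have hE''val2 : hjcf ((((e - 1) :: T) : List ℤ).map (fun x : ℤ => (x : ℚ)))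
                = ((p - q : ℤ) : ℚ) / (((p - q : ℤ) : ℚ) - ((p - 2*q : ℤ) : ℚ)) := by
              rw [hE''val]
              push_cast
              rw [show ((p:ℚ) - q) - ((p:ℚ) - 2*q) = (q:ℚ) by ring]
              field_simp
            -- coprimality of (p-q, p-2q)
            obtain ⟨a, b, hab⟩ := hcop
            have hcop2 : IsCoprime (p - q) (p - 2*q) :=
              ⟨2*a + b, -a - b, by linear_combination hab⟩
            have hsum := IH (p - q) (p - 2*q) T' ((e - 1) :: T)
              (by push_cast at hn ⊢; omega) (by omega) (by omega) hcop2
              hT'ne (by simp)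
              (fun x hx => hE' x (by simp [hx]))
              (by
                intro x hx
                rcases List.mem_cons.mp hx with rfl | hx
                · omega
                · exact hE x (by simp [hx]))
              hT'val2 hE''val2
            -- conclude
            subst he'
            simp only [List.map_cons, List.sum_cons] at hsum ⊢
            omega

/-- Riemenschneider: if `[e_1,…,e_k] = p/q` and
`[e'_1,…,e'_{k'}] = p/(p−q)` are the Hirzebruch–Jung expansions of the dual
fractions, then `∑ (e_i − 1) = ∑ (e'_j − 1)`. -/
theorem riemenschneider_sum_eq (p q : ℤ) (hq1 : 1 ≤ q) (hqp : q < p)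
    (hcop : IsCoprime p q)
    (E E' : List ℤ) (hne : E ≠ []) (hne' : E' ≠ [])
    (hE : ∀ x ∈ E, 2 ≤ x) (hE' : ∀ x ∈ E', 2 ≤ x)
    (hval : hjcf (E.map (fun x : ℤ => (x : ℚ))) = (p : ℚ) / (q : ℚ))
    (hval' : hjcf (E'.map (fun x : ℤ => (x : ℚ))) = (p : ℚ) / ((p : ℚ) - (q : ℚ))) :
    (E.map (fun x => x - 1)).sum = (E'.map (fun x => x - 1)).sum := by
  exact riem_main p.toNat p q E E' (by omega) hq1 hqp hcop hne hne' hE hE' hval hval'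
end

section
/- Let p > q ≥ 1 be coprime integers. Let (e_1, …, e_k) be a list of integers with each e_i ≥ 2 whose Hirzebruch–Jung continued fraction value equals p/q, and let (e'_1, …, e'_{k'}) be a list of integers with each e'_j ≥ 2 whose Hirzebruch–Jung continued fraction value equals p/(p−q). Then ∑_{i=1}^{k} (e_i − 1) = k + k' − 1; equivalently, setting the embedding dimension e = k' + 2, one has ∑_{i=1}^{k}(e_i − 1) = e + k − 3. -/
lemma hjcf_singleton (e : ℚ) : hjcf [e] = e := rfl

lemma hjcf_cons_s6 (x : ℚ) (l : List ℚ) (h : l ≠ []) : hjcf (x :: l) = x - 1 / hjcf l := by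
  cases l with
  | nil => exact absurd rfl h
  | cons f r => rfl

lemma hjcf_one_lt : ∀ (l : List ℚ), l ≠ [] → (∀ x ∈ l, 2 ≤ x) → 1 < hjcf l
  | [], h, _ => absurd rfl h
  | [e], _, h2 => by
      have := h2 e (by simp)
      simp only [hjcf_singleton]; linarith
  | e :: f :: r, _, h2 => by
      have ih := hjcf_one_lt (f :: r) (by simp) (fun x hx => h2 x (by simp [hx]))
      have h0 : 0 < hjcf (f :: r) := lt_trans one_pos ih
      have hlt : 1 / hjcf (f :: r) < 1 := by rw [div_lt_one h0]; exact ih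
      have he : 2 ≤ e := h2 e (by simp)
      rw [hjcf_cons_s6 e (f :: r) (by simp)]; linarith

lemma hjcf_head_two_lt (l : List ℚ) (h : l ≠ []) (h2 : ∀ x ∈ l, 2 ≤ x) :
    hjcf ((2 : ℚ) :: l) < 2 := by
  have h1 := hjcf_one_lt l h h2
  have h0 : 0 < hjcf l := lt_trans one_pos h1
  have : 0 < 1 / hjcf l := by positivity
  rw [hjcf_cons_s6 _ _ h]; linarith

lemma hjcf_head_three_gt (e : ℚ) (he : 3 ≤ e) (l : List ℚ) (h2 : ∀ x ∈ l, 2 ≤ x) :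
    2 < hjcf (e :: l) := by
  cases l with
  | nil => rw [hjcf_singleton]; linarith
  | cons f r =>
    have h1 := hjcf_one_lt (f :: r) (by simp) h2
    have h0 : 0 < hjcf (f :: r) := lt_trans one_pos h1
    have hlt : 1 / hjcf (f :: r) < 1 := by rw [div_lt_one h0]; exact h1
    rw [hjcf_cons_s6 e (f :: r) (by simp)]; linarith

lemma hjcf_sub_one (x : ℚ) (l : List ℚ) : hjcf ((x - 1) :: l) = hjcf (x :: l) - 1 := by
  cases l with
  | nil => simp [hjcf_singleton]
  | cons f r =>
    show (x - 1) - 1 / hjcf (f :: r) = (x - 1 / hjcf (f :: r)) - 1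
    ring

lemma step (p q : ℤ) (hq1 : 1 ≤ q) (hqp : q < p) (hcop : IsCoprime p q)
    (t : List ℤ) (ht : t ≠ []) (hEt : ∀ x ∈ t, (2:ℤ) ≤ x)
    (E' : List ℤ) (hne' : E' ≠ []) (hE' : ∀ x ∈ E', (2:ℤ) ≤ x)
    (hval : hjcf (((2:ℤ) :: t).map (fun x : ℤ => (x : ℚ))) = (p : ℚ) / (q : ℚ))
    (hval' : hjcf (E'.map (fun x : ℤ => (x : ℚ))) = (p : ℚ) / ((p : ℚ) - (q : ℚ))) :
    ∃ (p' q' : ℤ) (E'' : List ℤ),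
      1 ≤ q' ∧ q' < p' ∧ IsCoprime p' q' ∧ E'' ≠ [] ∧ (∀ x ∈ E'', (2:ℤ) ≤ x) ∧
      hjcf (t.map (fun x : ℤ => (x : ℚ))) = (p' : ℚ) / (q' : ℚ) ∧
      hjcf (E''.map (fun x : ℤ => (x : ℚ))) = (p' : ℚ) / ((p' : ℚ) - (q' : ℚ)) ∧
      E''.length = E'.length ∧
      (E''.map (fun x => x - 1)).sum = (E'.map (fun x => x - 1)).sum - 1 := by
  have hq0 : (0:ℚ) < (q:ℚ) := by exact_mod_cast hq1
  have htm : t.map (fun x : ℤ => (x : ℚ)) ≠ [] := by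
    simpa using ht
  have htm2 : ∀ x ∈ t.map (fun x : ℤ => (x : ℚ)), 2 ≤ x := by
    intro x hx
    obtain ⟨y, hy, rfl⟩ := List.mem_map.mp hx
    exact_mod_cast hEt y hy
  set H := hjcf (t.map (fun x : ℤ => (x : ℚ))) with hHdef
  have hH1 : 1 < H := hjcf_one_lt _ htm htm2
  have hH0 : 0 < H := lt_trans one_pos hH1
  have hval2 : (2:ℚ) - 1 / H = (p:ℚ) / (q:ℚ) := by
    rw [← hval, List.map_cons, hjcf_cons_s6 _ _ htm]
    norm_num
    exact hHdef
  -- p < 2q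
  have hplt : p < 2 * q := by
    have h1 : (p:ℚ) / (q:ℚ) < 2 := by
      have : 0 < 1 / H := by positivity
      linarith
    have : (p:ℚ) < 2 * (q:ℚ) := by
      rw [div_lt_iff₀ hq0] at h1; linarith
    exact_mod_cast this
  have hq'1 : 1 ≤ 2 * q - p := by omega
  have hq'p : 2 * q - p < q := by omega
  have hq'0 : (0:ℚ) < ((2 * q - p : ℤ) : ℚ) := by exact_mod_cast hq'1
  -- coprimality
  have hcop' : IsCoprime q (2 * q - p) := by
    have h1 : IsCoprime q (-p) := hcop.symm.neg_right
    have h2 := h1.add_mul_left_right 2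
    have : -p + q * 2 = 2 * q - p := by ring
    rwa [this] at h2
  -- H = q / (2q - p)
  have hH : H = (q : ℚ) / ((2 * q - p : ℤ) : ℚ) := by
    have hHne : H ≠ 0 := ne_of_gt hH0
    have hq'ne : ((2 * q - p : ℤ) : ℚ) ≠ 0 := ne_of_gt hq'0
    have hqne : (q:ℚ) ≠ 0 := ne_of_gt hq0
    rw [eq_div_iff hq'ne]
    field_simp at hval2
    push_cast
    linear_combination hval2
  -- destructure E'
  obtain ⟨e', t', rfl⟩ := List.exists_cons_of_ne_nil hne'
  have he'2 : (2:ℤ) ≤ e' := hE' e' (by simp)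
  have ht'2 : ∀ x ∈ t', (2:ℤ) ≤ x := fun x hx => hE' x (by simp [hx])
  have ht'm2 : ∀ x ∈ t'.map (fun x : ℤ => (x : ℚ)), 2 ≤ x := by
    intro x hx
    obtain ⟨y, hy, rfl⟩ := List.mem_map.mp hx
    exact_mod_cast ht'2 y hy
  have hpq0 : (0:ℚ) < (p:ℚ) - (q:ℚ) := by
    have : (q:ℚ) < (p:ℚ) := by exact_mod_cast hqp
    linarith
  have hvgt : 2 < (p:ℚ) / ((p:ℚ) - (q:ℚ)) := by
    rw [lt_div_iff₀ hpq0]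
    have : (p:ℚ) < 2 * (q:ℚ) := by exact_mod_cast hplt
    linarith
  have he'3 : (3:ℤ) ≤ e' := by
    by_contra h
    have he'eq : e' = 2 := by omega
    subst he'eq
    cases t' with
    | nil =>
      rw [List.map_cons, List.map_nil, hjcf_singleton] at hval'
      norm_num at hval'
      rw [← hval'] at hvgt
      norm_num at hvgt
    | cons f r =>
      have hlt := hjcf_head_two_lt ((f :: r).map (fun x : ℤ => (x : ℚ))) (by simp) (by
        intro x hx
        obtain ⟨y, hy, rfl⟩ := List.mem_map.mp hx
        exact_mod_cast ht'2 y hy)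
      rw [List.map_cons] at hval'
      push_cast at hval'
      rw [hval'] at hlt
      linarith
  refine ⟨q, 2 * q - p, (e' - 1) :: t', hq'1, hq'p, hcop', by simp, ?_, ?_, ?_, by simp, ?_⟩
  · intro x hx
    rcases List.mem_cons.mp hx with h | h
    · omega
    · exact ht'2 x h
  · exact hH
  · have hmap : ((e' - 1) :: t').map (fun x : ℤ => (x : ℚ))
        = ((e' : ℚ) - 1) :: t'.map (fun x : ℤ => (x : ℚ)) := by
      simp only [List.map_cons]
      push_cast
      ring_nf
    rw [hmap, hjcf_sub_one]
    rw [List.map_cons] at hval'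
    rw [hval']
    have hq2 : (q : ℚ) - ((2 * q - p : ℤ) : ℚ) = (p:ℚ) - (q:ℚ) := by push_cast; ring
    rw [hq2]
    field_simp
    ring
  · simp only [List.map_cons, List.sum_cons]
    ring

lemma cast_entries {l : List ℤ} (h : ∀ x ∈ l, (2:ℤ) ≤ x) :
    ∀ x ∈ l.map (fun x : ℤ => (x : ℚ)), 2 ≤ x := by
  intro x hx
  obtain ⟨y, hy, rfl⟩ := List.mem_map.mp hx
  exact_mod_cast h y hy

lemma key : ∀ (n : ℕ) (p q : ℤ), 1 ≤ q → q < p → IsCoprime p q →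
    ∀ (E E' : List ℤ), E.length + E'.length ≤ n → E ≠ [] → E' ≠ [] →
    (∀ x ∈ E, (2:ℤ) ≤ x) → (∀ x ∈ E', (2:ℤ) ≤ x) →
    hjcf (E.map (fun x : ℤ => (x : ℚ))) = (p : ℚ) / (q : ℚ) →
    hjcf (E'.map (fun x : ℤ => (x : ℚ))) = (p : ℚ) / ((p : ℚ) - (q : ℚ)) →
    (E.map (fun x => x - 1)).sum = (E.length : ℤ) + (E'.length : ℤ) - 1 ∧
    (E'.map (fun x => x - 1)).sum = (E.length : ℤ) + (E'.length : ℤ) - 1 := by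
  intro n
  induction n with
  | zero =>
    intro p q _ _ _ E E' hlen hne hne' _ _ _ _
    exfalso
    have h1 : 1 ≤ E.length := List.length_pos_iff.mpr hne
    omega
  | succ n ih =>
    intro p q hq1 hqp hcop E E' hlen hne hne' hE hE' hval hval'
    obtain ⟨e, t, rfl⟩ := List.exists_cons_of_ne_nil hne
    obtain ⟨e', t', rfl⟩ := List.exists_cons_of_ne_nil hne'
    have he2 : (2:ℤ) ≤ e := hE e (by simp)
    have he'2 : (2:ℤ) ≤ e' := hE' e' (by simp)
    have ht2 : ∀ x ∈ t, (2:ℤ) ≤ x := fun x hx => hE x (by simp [hx])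
    have ht'2 : ∀ x ∈ t', (2:ℤ) ≤ x := fun x hx => hE' x (by simp [hx])
    have hq0 : (0:ℚ) < (q:ℚ) := by exact_mod_cast hq1
    have hpq0 : (0:ℚ) < (p:ℚ) - (q:ℚ) := by
      have : (q:ℚ) < (p:ℚ) := by exact_mod_cast hqp
      linarith
    by_cases hA : e = 2 ∧ t ≠ []
    · obtain ⟨rfl, htne⟩ := hA
      obtain ⟨p', q', E'', hq'1, hq'p, hcop', hne'', hE'', hv1, hv2, hlen'', hsum''⟩ :=
        step p q hq1 hqp hcop t htne ht2 (e' :: t') (by simp) hE' hval hval'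
      have hrec := ih p' q' hq'1 hq'p hcop' t E''
        (by rw [hlen'']; simp at hlen ⊢; omega) htne hne'' ht2 hE'' hv1 hv2
      obtain ⟨h1, h2⟩ := hrec
      rw [hlen''] at h1 h2
      simp only [List.length_cons] at h1 h2 ⊢
      push_cast at h1 h2 ⊢
      constructor
      · simp only [List.map_cons, List.sum_cons]
        linarith
      · linarith
    · by_cases hB : e' = 2 ∧ t' ≠ []
      · obtain ⟨rfl, ht'ne⟩ := hB
        have hcop2 : IsCoprime p (p - q) := by
          have h1 : IsCoprime p (-q) := hcop.neg_right
          have h2 := h1.add_mul_left_right 1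
          have : -q + p * 1 = p - q := by ring
          rwa [this] at h2
        have hval'' : hjcf ((e :: t).map (fun x : ℤ => (x : ℚ)))
            = (p : ℚ) / ((p : ℚ) - ((p : ℚ) - (q : ℚ))) := by
          rw [hval]; ring_nf
        have hvalswap : hjcf (((2:ℤ) :: t').map (fun x : ℤ => (x : ℚ)))
            = (p : ℚ) / (((p - q : ℤ)) : ℚ) := by
          push_cast
          exact hval'
        obtain ⟨p', q', E'', hq'1, hq'p, hcop', hne'', hE'', hv1, hv2, hlen'', hsum''⟩ :=
          step p (p - q) (by omega) (by omega) hcop2 t' ht'ne ht'2 (e :: t) (by simp) hE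
            hvalswap (by push_cast; push_cast at hval''; exact hval'')
        have hrec := ih p' q' hq'1 hq'p hcop' t' E''
          (by rw [hlen'']; simp at hlen ⊢; omega) ht'ne hne'' ht'2 hE'' hv1 hv2
        obtain ⟨h1, h2⟩ := hrec
        rw [hlen''] at h1 h2
        simp only [List.length_cons] at h1 h2 hsum'' ⊢
        push_cast at h1 h2 ⊢
        simp only [List.map_cons, List.sum_cons] at hsum''
        constructor
        · simp only [List.map_cons, List.sum_cons]
          linarith
        · simp only [List.map_cons, List.sum_cons]
          linarith
      · -- degenerate case: show t = [], t' = [], p = 2, q = 1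
        push_neg at hA hB
        have htm2 := cast_entries ht2
        have ht'm2 := cast_entries ht'2
        have ht : t = [] := by
          by_contra htne
          have he3 : (3:ℤ) ≤ e := by
            rcases eq_or_lt_of_le he2 with h | h
            · exact absurd (hA h.symm) htne
            · omega
          have hgt : 2 < hjcf ((e :: t).map (fun x : ℤ => (x : ℚ))) := by
            rw [List.map_cons]
            exact hjcf_head_three_gt _ (by exact_mod_cast he3) _ htm2
          rw [hval] at hgt
          have hp2q : 2 * q < p := by
            rw [lt_div_iff₀ hq0] at hgt
            exact_mod_cast hgt
          -- then p/(p-q) < 2, contradict value of E'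
          have hlt2 : (p:ℚ) / ((p:ℚ) - (q:ℚ)) < 2 := by
            rw [div_lt_iff₀ hpq0]
            have : 2 * (q:ℤ) < p := hp2q
            have h2 : (2 * q : ℚ) < (p:ℚ) := by exact_mod_cast this
            linarith
          rcases eq_or_ne t' [] with rfl | ht'ne
          · rw [List.map_cons, List.map_nil, hjcf_singleton] at hval'
            rw [← hval'] at hlt2
            have : (2:ℚ) ≤ (e':ℚ) := by exact_mod_cast he'2
            linarith
          · have he'3 : (3:ℤ) ≤ e' := by
              rcases eq_or_lt_of_le he'2 with h | h
              · exact absurd (hB h.symm) ht'ne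
              · omega
            have hgt' : 2 < hjcf ((e' :: t').map (fun x : ℤ => (x : ℚ))) := by
              rw [List.map_cons]
              exact hjcf_head_three_gt _ (by exact_mod_cast he'3) _ ht'm2
            rw [hval'] at hgt'
            linarith
        subst ht
        -- F E = e, so q = 1, p = e
        rw [List.map_cons, List.map_nil, hjcf_singleton] at hval
        have hpe : p = e * q := by
          rw [eq_div_iff (ne_of_gt hq0)] at hval
          exact_mod_cast hval.symm
        have hq1' : q = 1 := by
          have hdvd : q ∣ p := ⟨e, by linarith [hpe]⟩
          have hg := Int.isCoprime_iff_gcd_eq_one.mp hcop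
          have h1 : q ∣ (1:ℤ) := by
            have := Int.dvd_coe_gcd hdvd (dvd_refl q)
            rwa [hg] at this
          exact le_antisymm (Int.le_of_dvd one_pos h1) hq1
        subst hq1'
        have hpe' : p = e := by omega
        have ht' : t' = [] := by
          by_contra ht'ne
          have he'3 : (3:ℤ) ≤ e' := by
            rcases eq_or_lt_of_le he'2 with h | h
            · exact absurd (hB h.symm) ht'ne
            · omega
          have hgt' : 2 < hjcf ((e' :: t').map (fun x : ℤ => (x : ℚ))) := by
            rw [List.map_cons]
            exact hjcf_head_three_gt _ (by exact_mod_cast he'3) _ ht'm2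
          rw [hval'] at hgt'
          push_cast at hgt' hpq0
          rw [lt_div_iff₀ hpq0] at hgt'
          have hplt : (p:ℚ) < 2 := by linarith
          have : p < 2 := by exact_mod_cast hplt
          omega
        subst ht'
        rw [List.map_cons, List.map_nil, hjcf_singleton] at hval'
        have hpe'' : p = e' * (p - 1) := by
          have hpne : (p:ℚ) - 1 ≠ 0 := by push_cast at hpq0; linarith
          push_cast at hval'
          rw [eq_div_iff hpne] at hval'
          have : (e':ℚ) * ((p:ℚ) - 1) = (p:ℚ) := hval'
          exact_mod_cast this.symm
        have hp2 : p = 2 := by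
          have hdvd : (p - 1) ∣ p := ⟨e', by linarith [hpe'']⟩
          have hcop3 : IsCoprime p (p - 1) := by
            have h1 : IsCoprime p (-1 : ℤ) := (isCoprime_one_right : IsCoprime p 1).neg_right
            have h2 := h1.add_mul_left_right 1
            have : (-1 : ℤ) + p * 1 = p - 1 := by ring
            rwa [this] at h2
          have hg := Int.isCoprime_iff_gcd_eq_one.mp hcop3
          have h1 : (p - 1) ∣ (1:ℤ) := by
            have := Int.dvd_coe_gcd hdvd (dvd_refl (p-1))
            rwa [hg] at this
          have := Int.le_of_dvd one_pos h1
          omega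
        have he : e = 2 := by omega
        have he' : e' = 2 := by
          rw [hp2] at hpe''
          linarith [hpe'']
        subst he he'
        simp

/-- if `[e_1,…,e_k] = p/q` and `[e'_1,…,e'_{k'}] = p/(p−q)` are the
dual Hirzebruch–Jung expansions, then `∑ (e_i − 1) = k + k' − 1`; equivalently,
with the embedding dimension `e = k' + 2`, one has `∑ (e_i − 1) = e + k − 3`. -/
theorem riemenschneider_sum_length (p q : ℤ) (hq1 : 1 ≤ q) (hqp : q < p)
    (hcop : IsCoprime p q)
    (E E' : List ℤ) (hne : E ≠ []) (hne' : E' ≠ [])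
    (hE : ∀ x ∈ E, 2 ≤ x) (hE' : ∀ x ∈ E', 2 ≤ x)
    (hval : hjcf (E.map (fun x : ℤ => (x : ℚ))) = (p : ℚ) / (q : ℚ))
    (hval' : hjcf (E'.map (fun x : ℤ => (x : ℚ))) = (p : ℚ) / ((p : ℚ) - (q : ℚ))) :
    (E.map (fun x => x - 1)).sum = (E.length : ℤ) + (E'.length : ℤ) - 1 ∧
      (E.map (fun x => x - 1)).sum = ((E'.length : ℤ) + 2) + (E.length : ℤ) - 3 := by
  obtain ⟨h1, _⟩ := key (E.length + E'.length) p q hq1 hqp hcop E E' le_rfl hne hne'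
    hE hE' hval hval'
  exact ⟨h1, by linarith⟩
end
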